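/- Let λ > 0, 0 < p ≤ 1 and 0 ≤ s ≤ 1. Then ∑_{n=0}^∞ s^n ∫₀^∞ e^{-t} ( ∑_{k=max(n,1)}^∞ e^{-λt}(1-e^{-λt})^{k-1} C(k,n) p^n (1-p)^{k-n} ) dt = ((ps+1-p)/(λ+1)) · ∑_{k=0}^∞ k! (ps+1-p)^k / ((2+1/λ)_k). That is, the probability generating function E(s^N) of the number of survivors in the Yule growth with binomial catastrophe scheme equals ((ps+1-p)/(λ+1)) · ₂F₁(1,1; 2+1/λ; p(s-1)+1), with the hypergeometric function written as the series ∑_{k≥0} k! x^k/(2+1/λ)_k at x = ps+1-p. -/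

import Mathlib

open MeasureTheory Real Finset
open scoped ENNReal


lemma asc_succ_left (n : ℕ) (a : ℝ) :
    (ascPochhammer ℝ (n+1)).eval a = a * (ascPochhammer ℝ n).eval (a+1) := by
  rw [ascPochhammer_succ_left]
  simp [Polynomial.eval_comp]

lemma partial_frac (j : ℕ) : ∀ a : ℝ, 0 < a →
    ∑ i ∈ Finset.range (j+1), (-1:ℝ)^i * (j.choose i) / (a+i)
      = (j.factorial : ℝ) / (ascPochhammer ℝ (j+1)).eval a := by
  induction j with
  | zero => intro a ha; simp [ascPochhammer_one]
  | succ j ih =>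
    intro a ha
    have hterm : ∀ i ∈ Finset.range (j+1),
        (-1:ℝ)^(i+1) * ((j+1).choose (i+1)) / (a + ((i+1 : ℕ) : ℝ))
        = (-1:ℝ)^(i+1) * (j.choose (i+1)) / (a + ((i+1 : ℕ) : ℝ))
          - (-1:ℝ)^i * (j.choose i) / (a + 1 + (i : ℝ)) := by
      intro i _
      rw [Nat.choose_succ_succ]
      push_cast
      ring
    have key : ∑ i ∈ Finset.range (j+2), (-1:ℝ)^i * ((j+1).choose i) / (a+i)
        = (∑ i ∈ Finset.range (j+2), (-1:ℝ)^i * (j.choose i) / (a+i))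
          - ∑ i ∈ Finset.range (j+1), (-1:ℝ)^i * (j.choose i) / ((a+1)+i) := by
      rw [Finset.sum_range_succ' (fun i => (-1:ℝ)^i * ((j+1).choose i) / (a+i)) (j+1),
        Finset.sum_range_succ' (fun i => (-1:ℝ)^i * (j.choose i) / (a+i)) (j+1),
        Finset.sum_congr rfl hterm, Finset.sum_sub_distrib]
      simp only [Nat.choose_zero_right]
      ring
    have h2 : ∑ i ∈ Finset.range (j+2), (-1:ℝ)^i * (j.choose i) / (a+i)
        = ∑ i ∈ Finset.range (j+1), (-1:ℝ)^i * (j.choose i) / (a+i) := by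
      rw [Finset.sum_range_succ, Nat.choose_succ_self]
      simp
    rw [key, h2, ih a ha, ih (a+1) (by linarith)]
    have e1 : (ascPochhammer ℝ (j+2)).eval a = a * (ascPochhammer ℝ (j+1)).eval (a+1) :=
      asc_succ_left (j+1) a
    have e2 : (ascPochhammer ℝ (j+2)).eval a
        = (ascPochhammer ℝ (j+1)).eval a * (a + ((j:ℝ)+1)) := by
      have := ascPochhammer_succ_eval (S := ℝ) (j+1) a
      push_cast at this
      linarith [this]
    have hPa : 0 < (ascPochhammer ℝ (j+1)).eval a := ascPochhammer_pos _ _ ha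
    have hPa1 : 0 < (ascPochhammer ℝ (j+1)).eval (a+1) := ascPochhammer_pos _ _ (by linarith)
    have hQ : 0 < (ascPochhammer ℝ (j+2)).eval a := ascPochhammer_pos _ _ ha
    have hf : (((j+1).factorial : ℕ) : ℝ) = ((j:ℝ)+1) * (j.factorial : ℝ) := by
      push_cast [Nat.factorial_succ]; ring
    rw [div_sub_div _ _ hPa.ne' hPa1.ne', div_eq_div_iff (by positivity) hQ.ne']
    linear_combination (-( (j.factorial:ℝ) * (ascPochhammer ℝ (j+1)).eval a)) * e1
      + ((j.factorial:ℝ) * (ascPochhammer ℝ (j+1)).eval (a+1)) * e2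
      - ((ascPochhammer ℝ (j+1)).eval a * (ascPochhammer ℝ (j+1)).eval (a+1)) * hf


lemma integral_exp_neg_mul {c : ℝ} (hc : 0 < c) :
    ∫ t in Set.Ioi (0:ℝ), Real.exp (-(c*t)) = 1/c := by
  have h := integral_comp_mul_left_Ioi (fun x => Real.exp (-x)) 0 hc
  simp only [mul_zero] at h
  rw [show (fun t : ℝ => Real.exp (-(c*t))) = (fun t : ℝ => Real.exp (-(c*t))) from rfl]
  calc ∫ t in Set.Ioi (0:ℝ), Real.exp (-(c*t)) = c⁻¹ • ∫ x in Set.Ioi (0:ℝ), Real.exp (-x) := h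
    _ = 1/c := by rw [integral_exp_neg_Ioi_zero]; simp [one_div]

lemma exp_integrable {c : ℝ} (hc : 0 < c) :
    IntegrableOn (fun t : ℝ => Real.exp (-(c*t))) (Set.Ioi (0:ℝ)) := by
  simpa [neg_mul] using exp_neg_integrableOn_Ioi 0 hc

lemma yule_J {l : ℝ} (hl : 0 < l) (j : ℕ) :
    ∫ t in Set.Ioi (0:ℝ), Real.exp (-t) * (Real.exp (-(l*t)) * (1 - Real.exp (-(l*t)))^j)
      = (j.factorial : ℝ) / ((l+1) * (ascPochhammer ℝ j).eval (2+1/l)) := by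
  have expand : ∀ t : ℝ, Real.exp (-t) * (Real.exp (-(l*t)) * (1 - Real.exp (-(l*t)))^j)
      = ∑ i ∈ Finset.range (j+1),
          (-1:ℝ)^i * (j.choose i) * Real.exp (-((1+l+l*i)*t)) := by
    intro t
    rw [show (1 - Real.exp (-(l*t))) = (-(Real.exp (-(l*t))) + 1) from by ring, add_pow]
    rw [Finset.mul_sum, Finset.mul_sum]
    refine Finset.sum_congr rfl fun i _ => ?_
    rw [neg_pow, one_pow, mul_one, ← Real.exp_nat_mul]
    have he : Real.exp (-t) * Real.exp (-(l*t)) * Real.exp ((i:ℝ) * -(l*t))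
        = Real.exp (-((1+l+l*i)*t)) := by
      rw [← Real.exp_add, ← Real.exp_add]
      congr 1
      ring
    rw [← he]
    ring
  simp_rw [expand]
  have hci : ∀ i : ℕ, (0:ℝ) < 1 + l + l*i := fun i => by positivity
  rw [integral_finset_sum _ (fun i _ => ((exp_integrable (hci i)).const_mul _))]
  have : ∀ i ∈ Finset.range (j+1),
      ∫ t in Set.Ioi (0:ℝ), (-1:ℝ)^i * (j.choose i) * Real.exp (-((1+l+l*i)*t))
        = (1/l) * ((-1:ℝ)^i * (j.choose i) / ((l+1)/l + i)) := by
    intro i _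
    rw [integral_const_mul, integral_exp_neg_mul (hci i)]
    have h1 : ((l+1)/l + i) ≠ 0 := by positivity
    field_simp
    ring_nf
  rw [Finset.sum_congr rfl this, ← Finset.mul_sum,
    partial_frac j ((l+1)/l) (by positivity), asc_succ_left j ((l+1)/l)]
  have h2 : (l+1)/l + 1 = 2 + 1/l := by field_simp; ring
  rw [h2]
  have h3 : (0:ℝ) < (ascPochhammer ℝ j).eval (2+1/l) :=
    ascPochhammer_pos _ _ (by positivity)
  field_simp


noncomputable def Fterm (l p : ℝ) (n k : ℕ) (t : ℝ) : ℝ :=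
  if max n 1 ≤ k then
    Real.exp (-(l * t)) * (1 - Real.exp (-(l * t))) ^ (k - 1) *
      (k.choose n : ℝ) * p ^ n * (1 - p) ^ (k - n)
  else 0

noncomputable def gE (l p : ℝ) (n : ℕ) (t : ℝ) : ℝ≥0∞ :=
  ENNReal.ofReal (Real.exp (-t)) * ∑' k : ℕ, ENNReal.ofReal (Fterm l p n k t)

lemma Fterm_nonneg {l p : ℝ} (hl : 0 ≤ l) (hp0 : 0 ≤ p) (hp1 : p ≤ 1)
    {t : ℝ} (ht : 0 ≤ t) (n k : ℕ) : 0 ≤ Fterm l p n k t := by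
  unfold Fterm
  split_ifs with h
  · have h1 : 0 ≤ 1 - Real.exp (-(l*t)) := by
      have : Real.exp (-(l*t)) ≤ 1 := Real.exp_le_one_iff.mpr (by nlinarith [mul_nonneg hl ht])
      linarith
    have h2 : (0:ℝ) ≤ 1 - p := by linarith
    exact mul_nonneg (mul_nonneg (mul_nonneg (mul_nonneg (Real.exp_pos _).le
      (pow_nonneg h1 _)) (Nat.cast_nonneg _)) (pow_nonneg hp0 _)) (pow_nonneg h2 _)
  · exact le_refl _

lemma Fterm_measurable (l p : ℝ) (n k : ℕ) : Measurable (fun t => Fterm l p n k t) := by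
  unfold Fterm
  split_ifs with h
  · fun_prop
  · exact measurable_const

lemma gE_measurable (l p : ℝ) (n : ℕ) : Measurable (gE l p n) := by
  unfold gE
  exact Measurable.mul (by fun_prop)
    (Measurable.ennreal_tsum fun k => ENNReal.measurable_ofReal.comp (Fterm_measurable l p n k))

lemma tsum_ofReal_toReal {f : ℕ → ℝ} (hf : ∀ n, 0 ≤ f n) :
    (∑' n, ENNReal.ofReal (f n)).toReal = ∑' n, f n := by
  by_cases h : Summable f
  · rw [← ENNReal.ofReal_tsum_of_nonneg hf h, ENNReal.toReal_ofReal (tsum_nonneg hf)]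
  · rw [tsum_eq_zero_of_not_summable h]
    have htop : ∑' n, ENNReal.ofReal (f n) = ⊤ := by
      by_contra hne
      exact h ((summable_congr fun n => ENNReal.toReal_ofReal (hf n)).mp
        (ENNReal.summable_toReal hne))
    simp [htop]

lemma yule_key {l p : ℝ} (hl : 0 < l) (hp0 : 0 < p) (hp1 : p ≤ 1)
    (σ : ℝ) (hσ0 : 0 ≤ σ) {t : ℝ} (ht : 0 < t) :
    ∑' n : ℕ, (ENNReal.ofReal σ)^n * gE l p n t
      = ∑' j : ℕ, ENNReal.ofReal (Real.exp (-t) * (Real.exp (-(l*t)) * (1 - Real.exp (-(l*t)))^j))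
          * (ENNReal.ofReal (p*σ+1-p))^(j+1) := by
  have hu0 : 0 < Real.exp (-(l*t)) := Real.exp_pos _
  have hu1 : Real.exp (-(l*t)) ≤ 1 :=
    Real.exp_le_one_iff.mpr (by nlinarith [mul_pos hl ht])
  have hq0 : (0:ℝ) ≤ 1 - Real.exp (-(l*t)) := by linarith
  have hx0 : 0 ≤ p*σ+1-p := by nlinarith
  have hstep1 : ∀ n : ℕ, (ENNReal.ofReal σ)^n * gE l p n t
      = ∑' k : ℕ, ENNReal.ofReal (σ^n * (Real.exp (-t) * Fterm l p n k t)) := by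
    intro n
    unfold gE
    rw [← ENNReal.tsum_mul_left, ← ENNReal.tsum_mul_left]
    refine tsum_congr fun k => ?_
    rw [← ENNReal.ofReal_pow hσ0, ← ENNReal.ofReal_mul (Real.exp_pos (-t)).le,
      ← ENNReal.ofReal_mul (pow_nonneg hσ0 n)]
  rw [tsum_congr hstep1, ENNReal.tsum_comm, tsum_eq_zero_add' ENNReal.summable]
  have h0 : (∑' n : ℕ, ENNReal.ofReal (σ^n * (Real.exp (-t) * Fterm l p n 0 t))) = 0 := by
    convert tsum_zero with n
    have hF0 : Fterm l p n 0 t = 0 := by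
      unfold Fterm; rw [if_neg (by omega)]
    simp [hF0]
  rw [h0, zero_add]
  refine tsum_congr fun j => ?_
  have hFj : ∀ n : ℕ, Fterm l p n (j+1) t
      = if n ≤ j+1 then Real.exp (-(l*t)) * (1 - Real.exp (-(l*t)))^j
          * (((j+1).choose n : ℕ) : ℝ) * p^n * (1-p)^(j+1-n) else 0 := by
    intro n
    unfold Fterm
    by_cases hn : n ≤ j+1
    · rw [if_pos (max_le hn (by omega)), if_pos hn]
      simp
    · rw [if_neg (fun hcon => hn (le_trans (le_max_left _ _) hcon)), if_neg hn]
  calc ∑' n : ℕ, ENNReal.ofReal (σ^n * (Real.exp (-t) * Fterm l p n (j+1) t))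
      = ∑ n ∈ Finset.range (j+2), ENNReal.ofReal (σ^n * (Real.exp (-t) * Fterm l p n (j+1) t)) := by
        refine tsum_eq_sum fun n hn => ?_
        rw [hFj n, if_neg (by simp at hn; omega)]
        simp
    _ = ENNReal.ofReal (∑ n ∈ Finset.range (j+2), σ^n * (Real.exp (-t) * Fterm l p n (j+1) t)) :=
        (ENNReal.ofReal_sum_of_nonneg fun n _ => mul_nonneg (pow_nonneg hσ0 _)
          (mul_nonneg (Real.exp_pos _).le (Fterm_nonneg hl.le hp0.le hp1 ht.le _ _))).symm
    _ = ENNReal.ofReal (Real.exp (-t) * (Real.exp (-(l*t)) * (1 - Real.exp (-(l*t)))^j)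
          * (p*σ + (1-p))^(j+1)) := by
        congr 1
        rw [add_pow, Finset.mul_sum]
        refine Finset.sum_congr rfl fun n hn => ?_
        rw [hFj n, if_pos (by simp at hn; omega), mul_pow]
        ring
    _ = ENNReal.ofReal (Real.exp (-t) * (Real.exp (-(l*t)) * (1 - Real.exp (-(l*t)))^j))
          * (ENNReal.ofReal (p*σ+1-p))^(j+1) := by
        rw [show p*σ + (1-p) = p*σ+1-p from by ring,
          ENNReal.ofReal_mul (mul_nonneg (Real.exp_pos _).le
            (mul_nonneg hu0.le (pow_nonneg hq0 _))),
          ENNReal.ofReal_pow hx0]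

lemma exp_neg_int : IntegrableOn (fun t : ℝ => Real.exp (-t)) (Set.Ioi (0:ℝ)) := by
  simpa [one_mul] using exp_integrable one_pos

lemma yule_bound {l p : ℝ} (hl : 0 < l) (hp0 : 0 < p) (hp1 : p ≤ 1) :
    ∫⁻ t in Set.Ioi (0:ℝ), ∑' n : ℕ, (ENNReal.ofReal (1:ℝ))^n * gE l p n t = 1 := by
  rw [setLIntegral_congr_fun measurableSet_Ioi
    (fun t ht => yule_key hl hp0 hp1 1 zero_le_one ht)]
  have h2 : ∀ t ∈ Set.Ioi (0:ℝ),
      (∑' j : ℕ, ENNReal.ofReal (Real.exp (-t) * (Real.exp (-(l*t)) * (1 - Real.exp (-(l*t)))^j))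
        * (ENNReal.ofReal (p*1+1-p))^(j+1)) = ENNReal.ofReal (Real.exp (-t)) := by
    intro t ht
    have ht' : (0:ℝ) < t := ht
    have hx : p*(1:ℝ)+1-p = 1 := by ring
    rw [hx]
    simp only [ENNReal.ofReal_one, one_pow, mul_one]
    have hu0 : 0 < Real.exp (-(l*t)) := Real.exp_pos _
    have hu1 : Real.exp (-(l*t)) ≤ 1 :=
      Real.exp_le_one_iff.mpr (by nlinarith [mul_pos hl ht'])
    have hq0 : (0:ℝ) ≤ 1 - Real.exp (-(l*t)) := by linarith
    calc ∑' j : ℕ, ENNReal.ofReal (Real.exp (-t) * (Real.exp (-(l*t)) * (1 - Real.exp (-(l*t)))^j))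
        = ∑' j : ℕ, ENNReal.ofReal (Real.exp (-t) * Real.exp (-(l*t)))
            * (ENNReal.ofReal (1 - Real.exp (-(l*t))))^j := by
          refine tsum_congr fun j => ?_
          rw [← ENNReal.ofReal_pow hq0, ← ENNReal.ofReal_mul
            (mul_nonneg (Real.exp_pos _).le hu0.le), mul_assoc]
      _ = ENNReal.ofReal (Real.exp (-t) * Real.exp (-(l*t)))
            * (1 - ENNReal.ofReal (1 - Real.exp (-(l*t))))⁻¹ := by
          rw [ENNReal.tsum_mul_left, ENNReal.tsum_geometric]
      _ = ENNReal.ofReal (Real.exp (-t)) := by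
          have he : (1:ℝ≥0∞) - ENNReal.ofReal (1 - Real.exp (-(l*t)))
              = ENNReal.ofReal (Real.exp (-(l*t))) := by
            rw [← ENNReal.ofReal_one, ← ENNReal.ofReal_sub _ hq0]
            norm_num
          rw [he, ENNReal.ofReal_mul (Real.exp_pos _).le, mul_assoc,
            ENNReal.mul_inv_cancel (ENNReal.ofReal_pos.mpr hu0).ne' ENNReal.ofReal_ne_top,
            mul_one]
  rw [setLIntegral_congr_fun measurableSet_Ioi h2,
    ← ofReal_integral_eq_lintegral_ofReal exp_neg_int
      (ae_of_all _ fun t => (Real.exp_pos _).le),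
    integral_exp_neg_Ioi_zero, ENNReal.ofReal_one]

/-- The probability generating function of the number of survivors in the Yule growth
(rate `l`) with binomial catastrophe (parameter `p`) scheme equals
`((ps+1-p)/(λ+1))·₂F₁(1,1;2+1/λ;ps+1-p)`, with the hypergeometric function written
as the series `∑ k! xᵏ/(2+1/λ)ₖ` at `x = ps+1-p`. -/
theorem yule_binomial_pgf (l p s : ℝ) (hl : 0 < l) (hp0 : 0 < p) (hp1 : p ≤ 1)
    (hs0 : 0 ≤ s) (hs1 : s ≤ 1) :
    ∑' n : ℕ, s ^ n *
      ∫ t in Set.Ioi (0:ℝ), Real.exp (-t) *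
        ∑' k : ℕ, (if max n 1 ≤ k then
          Real.exp (-(l * t)) * (1 - Real.exp (-(l * t))) ^ (k - 1) *
            (k.choose n : ℝ) * p ^ n * (1 - p) ^ (k - n)
          else 0)
      = ((p * s + 1 - p) / (l + 1)) *
        ∑' k : ℕ, (Nat.factorial k : ℝ) * (p * s + 1 - p) ^ k /
          (ascPochhammer ℝ k).eval (2 + 1 / l) := by
  have hFrfl : ∀ (n k : ℕ) (t : ℝ),
      (if max n 1 ≤ k then
          Real.exp (-(l * t)) * (1 - Real.exp (-(l * t))) ^ (k - 1) *
            (k.choose n : ℝ) * p ^ n * (1 - p) ^ (k - n)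
        else 0) = Fterm l p n k t := fun _ _ _ => rfl
  simp only [hFrfl]
  set x := p * s + 1 - p with hxdef
  have hx0 : 0 ≤ x := by nlinarith
  have hbound : ∀ n : ℕ, ∫⁻ t in Set.Ioi (0:ℝ), gE l p n t ≤ 1 := by
    intro n
    calc ∫⁻ t in Set.Ioi (0:ℝ), gE l p n t
        ≤ ∫⁻ t in Set.Ioi (0:ℝ), ∑' m : ℕ, (ENNReal.ofReal (1:ℝ))^m * gE l p m t := by
          refine lintegral_mono fun t => ?_
          have h1 : gE l p n t = (ENNReal.ofReal (1:ℝ))^n * gE l p n t := by simp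
          rw [h1]
          exact ENNReal.le_tsum n
      _ = 1 := yule_bound hl hp0 hp1
  have hfin : ∀ n, ∫⁻ t in Set.Ioi (0:ℝ), gE l p n t ≠ ⊤ :=
    fun n => ne_top_of_le_ne_top ENNReal.one_ne_top (hbound n)
  have hstep1 : ∀ n : ℕ,
      s ^ n * ∫ t in Set.Ioi (0:ℝ), Real.exp (-t) * ∑' k : ℕ, Fterm l p n k t
        = ((ENNReal.ofReal s)^n * ∫⁻ t in Set.Ioi (0:ℝ), gE l p n t).toReal := by
    intro n
    have hinteq : ∫ t in Set.Ioi (0:ℝ), Real.exp (-t) * ∑' k : ℕ, Fterm l p n k t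
        = (∫⁻ t in Set.Ioi (0:ℝ), gE l p n t).toReal := by
      have hae : ∀ᵐ t ∂(volume.restrict (Set.Ioi (0:ℝ))), gE l p n t < ⊤ :=
        ae_lt_top (gE_measurable l p n) (hfin n)
      rw [← integral_toReal (gE_measurable l p n).aemeasurable hae]
      refine setIntegral_congr_fun measurableSet_Ioi fun t ht => ?_
      have ht' : (0:ℝ) < t := ht
      unfold gE
      rw [ENNReal.toReal_mul, ENNReal.toReal_ofReal (Real.exp_pos _).le,
        tsum_ofReal_toReal (fun k => Fterm_nonneg hl.le hp0.le hp1 ht'.le n k)]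
    rw [hinteq, ENNReal.toReal_mul, ENNReal.toReal_pow, ENNReal.toReal_ofReal hs0]
  rw [tsum_congr hstep1,
    ← ENNReal.tsum_toReal_eq (fun n => ENNReal.mul_ne_top
      (ENNReal.pow_ne_top ENNReal.ofReal_ne_top) (hfin n))]
  have hlint : ∀ j : ℕ,
      ∫⁻ t in Set.Ioi (0:ℝ),
        ENNReal.ofReal (Real.exp (-t) * (Real.exp (-(l*t)) * (1 - Real.exp (-(l*t)))^j))
      = ENNReal.ofReal ((j.factorial : ℝ) / ((l+1) * (ascPochhammer ℝ j).eval (2+1/l))) := by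
    intro j
    have hint : IntegrableOn
        (fun t : ℝ => Real.exp (-t) * (Real.exp (-(l*t)) * (1 - Real.exp (-(l*t)))^j))
        (Set.Ioi (0:ℝ)) := by
      refine Integrable.mono exp_neg_int (Measurable.aestronglyMeasurable (by fun_prop)) ?_
      rw [ae_restrict_iff' measurableSet_Ioi]
      refine ae_of_all _ fun t ht => ?_
      have ht' : (0:ℝ) < t := ht
      have hu0 : 0 < Real.exp (-(l*t)) := Real.exp_pos _
      have hu1 : Real.exp (-(l*t)) ≤ 1 :=
        Real.exp_le_one_iff.mpr (by nlinarith [mul_pos hl ht'])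
      have hq0 : (0:ℝ) ≤ 1 - Real.exp (-(l*t)) := by linarith
      have hq1 : (1:ℝ) - Real.exp (-(l*t)) ≤ 1 := by linarith
      rw [Real.norm_eq_abs, Real.norm_eq_abs, abs_of_nonneg
        (mul_nonneg (Real.exp_pos _).le (mul_nonneg hu0.le (pow_nonneg hq0 _))),
        abs_of_nonneg (Real.exp_pos _).le]
      have h3 : (1 - Real.exp (-(l*t)))^j ≤ 1 := pow_le_one₀ hq0 hq1
      nlinarith [Real.exp_pos (-t), mul_pos (Real.exp_pos (-t)) hu0]
    rw [← ofReal_integral_eq_lintegral_ofReal hint, yule_J hl j]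
    filter_upwards [ae_restrict_mem measurableSet_Ioi] with t ht
    have ht' : (0:ℝ) < t := ht
    have hu1 : Real.exp (-(l*t)) ≤ 1 :=
      Real.exp_le_one_iff.mpr (by nlinarith [mul_pos hl ht'])
    have hq0 : (0:ℝ) ≤ 1 - Real.exp (-(l*t)) := by linarith
    positivity
  have hENN : (∑' n : ℕ, (ENNReal.ofReal s)^n * ∫⁻ t in Set.Ioi (0:ℝ), gE l p n t)
      = ∑' j : ℕ, ENNReal.ofReal
          (x^(j+1) * ((j.factorial : ℝ) / ((l+1) * (ascPochhammer ℝ j).eval (2+1/l)))) := by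
    calc ∑' n : ℕ, (ENNReal.ofReal s)^n * ∫⁻ t in Set.Ioi (0:ℝ), gE l p n t
        = ∑' n : ℕ, ∫⁻ t in Set.Ioi (0:ℝ), (ENNReal.ofReal s)^n * gE l p n t :=
          tsum_congr fun n => (lintegral_const_mul' _ _
            (ENNReal.pow_ne_top ENNReal.ofReal_ne_top)).symm
      _ = ∫⁻ t in Set.Ioi (0:ℝ), ∑' n : ℕ, (ENNReal.ofReal s)^n * gE l p n t :=
          (lintegral_tsum fun n => ((gE_measurable l p n).const_mul _).aemeasurable).symm
      _ = ∫⁻ t in Set.Ioi (0:ℝ), ∑' j : ℕ,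
            ENNReal.ofReal (Real.exp (-t) * (Real.exp (-(l*t)) * (1 - Real.exp (-(l*t)))^j))
              * (ENNReal.ofReal x)^(j+1) :=
          setLIntegral_congr_fun measurableSet_Ioi
            (fun t ht => yule_key hl hp0 hp1 s hs0 ht)
      _ = ∑' j : ℕ, ∫⁻ t in Set.Ioi (0:ℝ),
            ENNReal.ofReal (Real.exp (-t) * (Real.exp (-(l*t)) * (1 - Real.exp (-(l*t)))^j))
              * (ENNReal.ofReal x)^(j+1) :=
          lintegral_tsum fun j => (Measurable.mul (f := fun t : ℝ => ENNReal.ofReal (Real.exp (-t) * (Real.exp (-(l*t)) * (1 - Real.exp (-(l*t)))^j))) (by fun_prop) measurable_const).aemeasurable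
      _ = ∑' j : ℕ, (ENNReal.ofReal x)^(j+1) * ∫⁻ t in Set.Ioi (0:ℝ),
            ENNReal.ofReal (Real.exp (-t) * (Real.exp (-(l*t)) * (1 - Real.exp (-(l*t)))^j)) := by
          refine tsum_congr fun j => ?_
          simp_rw [mul_comm _ ((ENNReal.ofReal x)^(j+1))]
          exact lintegral_const_mul' _ _ (ENNReal.pow_ne_top ENNReal.ofReal_ne_top)
      _ = ∑' j : ℕ, ENNReal.ofReal
            (x^(j+1) * ((j.factorial : ℝ) / ((l+1) * (ascPochhammer ℝ j).eval (2+1/l)))) := by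
          refine tsum_congr fun j => ?_
          rw [hlint j, ← ENNReal.ofReal_pow hx0, ← ENNReal.ofReal_mul (pow_nonneg hx0 _)]
  rw [hENN, tsum_ofReal_toReal]
  · rw [← tsum_mul_left]
    refine tsum_congr fun j => ?_
    have h3 : (0:ℝ) < (ascPochhammer ℝ j).eval (2+1/l) :=
      ascPochhammer_pos _ _ (by positivity)
    have h4 : (0:ℝ) < l + 1 := by linarith
    rw [pow_succ]
    field_simp
  · intro j
    have h3 : (0:ℝ) < (ascPochhammer ℝ j).eval (2+1/l) :=
      ascPochhammer_pos _ _ (by positivity)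
    positivity
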